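/- There is no edge-regular graph with parameters (8,4,2); that is, there is no 4-regular graph on 8 vertices in which every pair of adjacent vertices has exactly 2 common neighbours. -/

import Mathlib

/-- There is no edge-regular graph with parameters (8,4,2). -/
theorem no_edge_regular_8_4_2 (V : Type*) [Fintype V] [DecidableEq V]
    (G : SimpleGraph V) [DecidableRel G.Adj]
    (hcard : Fintype.card V = 8)
    (hreg : G.IsRegularOfDegree 4)
    (hlam : ∀ u v : V, G.Adj u v → Fintype.card (G.commonNeighbors u v) = 2) :
    False := by
  classical
  have hne : Nonempty V := by
    rw [← Fintype.card_pos_iff]; omega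
  obtain ⟨v⟩ := hne
  set N := G.neighborFinset v with hNdef
  have hNcard : N.card = 4 := by rw [hNdef, SimpleGraph.card_neighborFinset_eq_degree]; exact hreg v
  have hvN : v ∉ N := by simp [hNdef]
  set M := Finset.univ \ insert v N with hMdef
  have hMcard : M.card = 3 := by
    rw [hMdef, Finset.card_sdiff_of_subset (Finset.subset_univ _),
      Finset.card_insert_of_notMem hvN, hNcard, Finset.card_univ, hcard]
  have hNfilter : N = Finset.univ.filter (G.Adj v) := by
    ext w; simp [hNdef]
  -- common neighbor count as finset
  have hcommon : ∀ u, G.Adj v u → (N.filter (G.Adj u)).card = 2 := by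
    intro u hu
    have h2 := hlam u v hu.symm
    have heq : N.filter (G.Adj u) = (G.commonNeighbors u v).toFinset := by
      ext w
      simp [hNdef, SimpleGraph.mem_commonNeighbors, and_comm]
    rw [heq, Set.toFinset_card, h2]
  -- Step A : each u in N has exactly one neighbor in M
  have hA : ∀ u ∈ N, (M.filter (G.Adj u)).card = 1 := by
    intro u hu
    have hadj : G.Adj v u := by
      rw [hNdef, SimpleGraph.mem_neighborFinset] at hu; exact hu
    have hdeg : (Finset.univ.filter (G.Adj u)).card = 4 := by
      have := hreg u
      rwa [← SimpleGraph.card_neighborFinset_eq_degree,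
        SimpleGraph.neighborFinset_eq_filter] at this
    have hsplit : Finset.univ.filter (G.Adj u)
        = (insert v N).filter (G.Adj u) ∪ M.filter (G.Adj u) := by
      rw [← Finset.filter_union, hMdef,
        Finset.union_sdiff_of_subset (Finset.subset_univ _)]
    have hdisj : Disjoint ((insert v N).filter (G.Adj u)) (M.filter (G.Adj u)) := by
      apply Finset.disjoint_filter_filter
      rw [hMdef]
      exact Finset.disjoint_sdiff
    have hins : (insert v N).filter (G.Adj u) = insert v (N.filter (G.Adj u)) := by
      rw [Finset.filter_insert, if_pos hadj.symm]
    have hvNf : v ∉ N.filter (G.Adj u) := fun h => hvN (Finset.mem_of_mem_filter v h)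
    have hc1 : ((insert v N).filter (G.Adj u)).card = 3 := by
      rw [hins, Finset.card_insert_of_notMem hvNf, hcommon u hadj]
    have := hdeg
    rw [hsplit, Finset.card_union_of_disjoint hdisj, hc1] at this
    omega
  -- Step B : each w in M has at least 2 neighbors in N
  have hB : ∀ w ∈ M, 2 ≤ (N.filter (G.Adj w)).card := by
    intro w hw
    rw [hMdef, Finset.mem_sdiff, Finset.mem_insert] at hw
    push_neg at hw
    obtain ⟨-, hwv, hwN⟩ := hw
    have hnadj : ¬ G.Adj w v := by
      intro h
      exact hwN (by rw [hNdef, SimpleGraph.mem_neighborFinset]; exact h.symm)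
    have hdeg : (Finset.univ.filter (G.Adj w)).card = 4 := by
      have := hreg w
      rwa [← SimpleGraph.card_neighborFinset_eq_degree,
        SimpleGraph.neighborFinset_eq_filter] at this
    have hsplit : Finset.univ.filter (G.Adj w)
        = (insert v N).filter (G.Adj w) ∪ M.filter (G.Adj w) := by
      rw [← Finset.filter_union, hMdef,
        Finset.union_sdiff_of_subset (Finset.subset_univ _)]
    have hins : (insert v N).filter (G.Adj w) = N.filter (G.Adj w) := by
      rw [Finset.filter_insert, if_neg hnadj]
    have hMle : (M.filter (G.Adj w)).card ≤ 2 := by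
      have hsub : M.filter (G.Adj w) ⊆ M.erase w := by
        intro x hx
        rw [Finset.mem_filter] at hx
        rw [Finset.mem_erase]
        exact ⟨fun h => G.loopless.irrefl w (h ▸ hx.2), hx.1⟩
      calc (M.filter (G.Adj w)).card ≤ (M.erase w).card := Finset.card_le_card hsub
        _ ≤ M.card - 1 := by rw [Finset.card_erase_of_mem (by
              rw [hMdef, Finset.mem_sdiff, Finset.mem_insert]; push_neg
              exact ⟨Finset.mem_univ w, hwv, hwN⟩)]
        _ = 2 := by rw [hMcard]
    have hle : (Finset.univ.filter (G.Adj w)).card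
        ≤ (N.filter (G.Adj w)).card + (M.filter (G.Adj w)).card := by
      rw [hsplit, ← hins]
      exact Finset.card_union_le _ _
    omega
  -- double counting
  have hsum : ∑ u ∈ N, (M.filter (G.Adj u)).card
      = ∑ w ∈ M, (N.filter (G.Adj w)).card := by
    simp_rw [Finset.card_filter]
    rw [Finset.sum_comm]
    refine Finset.sum_congr rfl fun w _ => Finset.sum_congr rfl fun u _ => ?_
    simp [G.adj_comm]
  have hL : ∑ u ∈ N, (M.filter (G.Adj u)).card = 4 := by
    rw [Finset.sum_congr rfl hA, Finset.sum_const, hNcard]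
    simp
  have hR : 6 ≤ ∑ w ∈ M, (N.filter (G.Adj w)).card := by
    calc 6 = ∑ _w ∈ M, 2 := by rw [Finset.sum_const, hMcard]; rfl
      _ ≤ _ := Finset.sum_le_sum hB
  omega
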